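/- Let 𝔽 be ℝ or ℂ, let V be an 𝔽-vector space of countable dimension, and let X be a compact Hausdorff space. Equip V with the finest topology making it the colimit of its compact convex subsets of finite-dimensional subspaces (equivalently: a map from a compact space to V is continuous iff it factors continuously through a compact subset of a finite-dimensional subspace). Then the natural linear map C(X, 𝔽) ⊗_𝔽 V → C(X, V) is bijective; in particular every continuous map X → V has image contained in a finite-dimensional subspace of V. -/

import Mathlib

open Function

section Aux
variable {𝔽 : Type} [RCLike 𝔽] {V : Type} [AddCommGroup V] [Module 𝔽 V]
  {X : Type} [TopologicalSpace X] [CompactSpace X] [T2Space X]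

set_option synthInstance.maxHeartbeats 1000000 in
set_option maxHeartbeats 1000000 in
lemma aux_inj (Φ : TensorProduct 𝔽 C(X, 𝔽) V →ₗ[𝔽] (X → V))
    (hΦ : ∀ (f : C(X, 𝔽)) (v : V) (x : X), Φ (f ⊗ₜ v) x = f x • v) :
    Injective Φ := by
  classical
  let b := Module.Basis.ofVectorSpace 𝔽 V
  let E : TensorProduct 𝔽 C(X, 𝔽) V ≃ₗ[𝔽] (Module.Basis.ofVectorSpaceIndex 𝔽 V →₀ C(X, 𝔽)) :=
    (TensorProduct.congr (LinearEquiv.refl 𝔽 _) b.repr).trans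
      (TensorProduct.finsuppScalarRight 𝔽 𝔽 C(X, 𝔽) _)
  have key : ∀ t (j : Module.Basis.ofVectorSpaceIndex 𝔽 V) (x : X),
      (E t) j x = b.repr (Φ t x) j := by
    intro t
    induction t using TensorProduct.induction_on with
    | zero => intro j x; simp
    | tmul f v =>
      intro j x
      simp [E, TensorProduct.finsuppScalarRight_apply_tmul_apply, hΦ, mul_comm]
    | add s t hs ht =>
      intro j x
      simp only [map_add, Finsupp.add_apply, ContinuousMap.add_apply, Pi.add_apply,
        hs, ht]
  intro a c hac
  apply E.injective
  have : E a - E c = 0 := by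
    rw [← map_sub]
    ext j x
    rw [key, map_sub]
    have h2 : Φ a x - Φ c x = 0 := by rw [hac, sub_self]
    simp [h2]
  exact sub_eq_zero.mp this

end Aux

theorem stmt_7 (𝔽 : Type) [RCLike 𝔽] (V : Type) [AddCommGroup V] [Module 𝔽 V]
    (hcount : ∃ s : Set V, s.Countable ∧ Submodule.span 𝔽 s = ⊤)
    [TopologicalSpace V]
    (hfine : ∀ (K : Type) [TopologicalSpace K] [CompactSpace K] [T2Space K]
      (f : K → V), Continuous f ↔
        ∃ (n : ℕ) (ι : (Fin n → 𝔽) →ₗ[𝔽] V) (g : K → (Fin n → 𝔽)),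
          Injective ι ∧ Continuous g ∧ f = ι ∘ g)
    (X : Type) [TopologicalSpace X] [CompactSpace X] [T2Space X] :
    Injective (TensorProduct.lift
        (LinearMap.mk₂ 𝔽 (fun (f : C(X, 𝔽)) (v : V) => fun x : X => f x • v)
          (fun f f' v => by funext x; simp [add_smul]
            )
          (fun c f v => by funext x; simp [mul_smul]
            )
          (fun f v v' => by funext x; simp [smul_add]
            )
          (fun c f v => by funext x; simp only [Pi.smul_apply]; rw [smul_comm]
            )) :
      TensorProduct 𝔽 C(X, 𝔽) V →ₗ[𝔽] (X → V)) ∧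
    Set.range (TensorProduct.lift
        (LinearMap.mk₂ 𝔽 (fun (f : C(X, 𝔽)) (v : V) => fun x : X => f x • v)
          (fun f f' v => by funext x; simp [add_smul]
            )
          (fun c f v => by funext x; simp [mul_smul]
            )
          (fun f v v' => by funext x; simp [smul_add]
            )
          (fun c f v => by funext x; simp only [Pi.smul_apply]; rw [smul_comm]
            )) :
      TensorProduct 𝔽 C(X, 𝔽) V →ₗ[𝔽] (X → V)) = {f : X → V | Continuous f} ∧
    ∀ f : X → V, Continuous f →
      ∃ W : Submodule 𝔽 V, FiniteDimensional 𝔽 W ∧ Set.range f ⊆ (W : Set V) := by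
  classical
  set Φ : TensorProduct 𝔽 C(X, 𝔽) V →ₗ[𝔽] (X → V) := TensorProduct.lift
        (LinearMap.mk₂ 𝔽 (fun (f : C(X, 𝔽)) (v : V) => fun x : X => f x • v)
          (fun f f' v => by funext x; simp [add_smul])
          (fun c f v => by funext x; simp [mul_smul])
          (fun f v v' => by funext x; simp [smul_add])
          (fun c f v => by funext x; simp only [Pi.smul_apply]; rw [smul_comm])) with hΦdef
  have hΦ : ∀ (f : C(X, 𝔽)) (v : V) (x : X), Φ (f ⊗ₜ v) x = f x • v := by
    intro f v x; simp [hΦdef, TensorProduct.lift.tmul]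
  refine ⟨aux_inj Φ hΦ, ?_, ?_⟩
  · ext f
    simp only [Set.mem_range, Set.mem_setOf_eq]
    constructor
    · rintro ⟨t, rfl⟩
      obtain ⟨s, hs⟩ := TensorProduct.exists_finset t
      set W : Submodule 𝔽 V := Submodule.span 𝔽 (↑(s.image Prod.snd) : Set V) with hW
      have hWfd : FiniteDimensional 𝔽 W := by
        apply FiniteDimensional.span_of_finite
        exact (s.image Prod.snd).finite_toSet
      set n := Module.finrank 𝔽 W with hn
      let bW : Module.Basis (Fin n) 𝔽 W := Module.finBasis 𝔽 W
      have hmem : ∀ p ∈ s, (p : C(X, 𝔽) × V).2 ∈ W := by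
        intro p hp
        apply Submodule.subset_span
        simp only [Finset.coe_image, Set.mem_image, Finset.mem_coe]
        exact ⟨p, hp, rfl⟩
      let F : X → W := fun x => ∑ p ∈ s.attach, (p : C(X, 𝔽) × V).1 x •
        (⟨(p : C(X, 𝔽) × V).2, hmem p p.2⟩ : W)
      have hF : ∀ x, Φ t x = (F x : V) := by
        intro x
        have h1 : ((F x : V)) = ∑ p ∈ s.attach, (p : C(X, 𝔽) × V).1 x • (p : C(X, 𝔽) × V).2 := by
          simp [F]
        rw [hs, map_sum, h1, Finset.sum_apply]
        simp only [hΦ]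
        exact (Finset.sum_attach s fun p => p.1 x • p.2).symm
      let g0 : X → Fin n → 𝔽 := fun x => bW.equivFun (F x)
      have hg0 : Continuous g0 := by
        have h2 : g0 = fun x => ∑ p ∈ s.attach,
            (p : C(X, 𝔽) × V).1 x • bW.equivFun ⟨(p : C(X, 𝔽) × V).2, hmem p p.2⟩ := by
          funext x; simp only [g0, F, map_sum, map_smul]
        rw [h2]
        exact continuous_finset_sum _ fun p _ =>
          ((map_continuous (p : C(X, 𝔽) × V).1).smul continuous_const)
      apply (hfine X (Φ t)).mpr
      refine ⟨n, W.subtype ∘ₗ (bW.equivFun.symm : (Fin n → 𝔽) ≃ₗ[𝔽] W).toLinearMap, g0,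
        ?_, hg0, ?_⟩
      · intro a c h
        have h3 : ((bW.equivFun.symm a : W) : V) = ((bW.equivFun.symm c : W) : V) := h
        exact bW.equivFun.symm.injective (Subtype.coe_injective h3)
      · funext x
        show Φ t x = ((bW.equivFun.symm (bW.equivFun (F x)) : W) : V)
        rw [LinearEquiv.symm_apply_apply, hF]
    · rintro hf
      obtain ⟨n, ι, g, hι, hg, hfg⟩ := (hfine X f).mp hf
      refine ⟨∑ j : Fin n, (⟨fun x => g x j, (continuous_apply j).comp hg⟩ : C(X, 𝔽))
        ⊗ₜ ι (fun k => if j = k then 1 else 0), ?_⟩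
      rw [map_sum]
      funext x
      simp only [Finset.sum_apply, hΦ, ContinuousMap.coe_mk]
      have h1 : ∑ j : Fin n, g x j • ι (fun k => if j = k then 1 else 0) = ι (g x) := by
        simp_rw [← map_smul, ← map_sum]
        congr 1
        exact (pi_eq_sum_univ (g x)).symm
      rw [h1, hfg, comp_apply]
  · intro f hf
    obtain ⟨n, ι, g, hι, hg, hfg⟩ := (hfine X f).mp hf
    refine ⟨LinearMap.range ι, inferInstance, ?_⟩
    rintro v ⟨x, rfl⟩
    rw [hfg]
    exact ⟨g x, rfl⟩
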